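/- arXiv:2504.06270 — 3 statements merged into one kernel-verified Lean document; each statement's English description precedes it below -/
import Mathlib

section
/- If z_t = √α_t·z_0 + √c_t·h + √(1-α_t)·ε and z_{t-1} = κ_t·z_t + λ_t·z_0 + ν_t·h + σ_t·ε' with κ_t, λ_t, ν_t as defined, then z_{t-1} = √α_{t-1}·z_0 + √c_{t-1}·h + (κ_t·√(1-α_t)·ε + σ_t·ε'), and the coefficient vector (κ_t·√(1-α_t), σ_t) has Euclidean norm √(1-α_{t-1}). -/
/-- If z_t = √α_t·z_0 + √c_t·h + √(1-α_t)·ε and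
z_{t-1} = κ_t·z_t + λ_t·z_0 + ν_t·h + σ_t·ε', then
z_{t-1} = √α_{t-1}·z_0 + √c_{t-1}·h + (κ_t·√(1-α_t)·ε + σ_t·ε'),
and the coefficient vector (κ_t·√(1-α_t), σ_t) has Euclidean norm √(1-α_{t-1}). -/
theorem reverse_step_identity (d : ℕ) (z₀ h ε ε' : EuclideanSpace ℝ (Fin d))
    (α α' c c' σ : ℝ)
    (hα : α ∈ Set.Ioo (0:ℝ) 1) (hα' : α' ∈ Set.Ioo (0:ℝ) 1)
    (hc : 0 ≤ c) (hc' : 0 ≤ c') (hσ : 0 ≤ σ) (hσ2 : σ ^ 2 ≤ 1 - α')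
    (κ lam ν : ℝ)
    (hκ : κ = Real.sqrt ((1 - α' - σ ^ 2) / (1 - α)))
    (hlam : lam = Real.sqrt α' - Real.sqrt α * κ)
    (hν : ν = Real.sqrt c' - Real.sqrt c * κ)
    (zt zt' : EuclideanSpace ℝ (Fin d))
    (hzt : zt = Real.sqrt α • z₀ + Real.sqrt c • h + Real.sqrt (1 - α) • ε)
    (hzt' : zt' = κ • zt + lam • z₀ + ν • h + σ • ε') :
    zt' = Real.sqrt α' • z₀ + Real.sqrt c' • h
          + (κ • Real.sqrt (1 - α) • ε + σ • ε') ∧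
    Real.sqrt ((κ * Real.sqrt (1 - α)) ^ 2 + σ ^ 2) = Real.sqrt (1 - α') := by
  have h1α : (0:ℝ) < 1 - α := by linarith [hα.2]
  constructor
  · subst hzt' hzt hlam hν
    simp only [smul_add, smul_smul]
    module
  · have hnum : 0 ≤ 1 - α' - σ ^ 2 := by linarith
    have hκ2 : κ ^ 2 = (1 - α' - σ ^ 2) / (1 - α) := by
      rw [hκ, Real.sq_sqrt (by positivity)]
    have hs2 : Real.sqrt (1 - α) ^ 2 = 1 - α := Real.sq_sqrt h1α.le
    have : (κ * Real.sqrt (1 - α)) ^ 2 + σ ^ 2 = 1 - α' := by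
      rw [mul_pow, hκ2, hs2]
      field_simp
      ring
    rw [this]
end

section
/- If X ~ N(√α_t·z_0 + √c_t·h, (1-α_t)I) and conditionally on X = x, Y ~ N(κ_t·x + λ_t·z_0 + ν_t·h, σ_t²I), then the marginal distribution of Y is N(√α_{t-1}·z_0 + √c_{t-1}·h, (1-α_{t-1})I). -/
open MeasureTheory ProbabilityTheory Real
open scoped NNReal ENNReal

noncomputable section
namespace DiffAux

lemma meas_joint (a b : ℝ) (w : ℝ≥0) :
    Measurable (fun p : ℝ × ℝ => gaussianPDF (a * p.1 + b) w p.2) := by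
  unfold gaussianPDF gaussianPDFReal
  apply Measurable.ennreal_ofReal
  fun_prop

lemma meas_kernel (a b : ℝ) (w : ℝ≥0) (hw : w ≠ 0) :
    Measurable (fun x : ℝ => gaussianReal (a * x + b) w) := by
  rw [Measure.measurable_measure]
  intro s _
  simp_rw [gaussianReal_apply _ hw s]
  exact Measurable.lintegral_prod_right'
    ((meas_joint a b w).comp (measurable_fst.prodMk measurable_snd))

lemma pdf_mul_pdf (μ b a : ℝ) (v w : ℝ≥0) (hv : v ≠ 0) (hw : w ≠ 0) (x y : ℝ) :
    gaussianPDFReal μ v x * gaussianPDFReal (a * x + b) w y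
      = gaussianPDFReal (a * μ + b) (⟨a ^ 2, sq_nonneg a⟩ * v + w) y
        * gaussianPDFReal ((μ * w + a * (y - b) * v) / (a ^ 2 * v + w))
            (v * w / (⟨a ^ 2, sq_nonneg a⟩ * v + w)) x := by
  have hV : (0:ℝ) < v := lt_of_le_of_ne v.coe_nonneg (by exact_mod_cast (Ne.symm hv))
  have hW : (0:ℝ) < w := lt_of_le_of_ne w.coe_nonneg (by exact_mod_cast (Ne.symm hw))
  have hS : (0:ℝ) < a ^ 2 * v + w := by positivity
  have hcoeS : ((⟨a ^ 2, sq_nonneg a⟩ * v + w : ℝ≥0) : ℝ) = a ^ 2 * v + w := by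
    push_cast; rfl
  have hcoeU : ((v * w / (⟨a ^ 2, sq_nonneg a⟩ * v + w) : ℝ≥0) : ℝ)
      = v * w / (a ^ 2 * v + w) := by
    rw [NNReal.coe_div, NNReal.coe_mul, hcoeS]
  unfold gaussianPDFReal
  rw [hcoeS, hcoeU]
  have hsqrt : (√(2 * π * v))⁻¹ * (√(2 * π * w))⁻¹
      = (√(2 * π * (a ^ 2 * v + w)))⁻¹ * (√(2 * π * (v * w / (a ^ 2 * v + w))))⁻¹ := by
    rw [← mul_inv, ← mul_inv, ← Real.sqrt_mul (by positivity), ← Real.sqrt_mul (by positivity)]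
    congr 1
    field_simp
  have hexp : -(x - μ) ^ 2 / (2 * v) + -(y - (a * x + b)) ^ 2 / (2 * w)
      = -(y - (a * μ + b)) ^ 2 / (2 * (a ^ 2 * v + w))
        + -(x - (μ * w + a * (y - b) * v) / (a ^ 2 * v + w)) ^ 2
          / (2 * (v * w / (a ^ 2 * v + w))) := by
    field_simp
    ring
  calc (√(2 * π * v))⁻¹ * rexp (-(x - μ) ^ 2 / (2 * v))
        * ((√(2 * π * w))⁻¹ * rexp (-(y - (a * x + b)) ^ 2 / (2 * w)))
      = (√(2 * π * v))⁻¹ * (√(2 * π * w))⁻¹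
        * rexp (-(x - μ) ^ 2 / (2 * v) + -(y - (a * x + b)) ^ 2 / (2 * w)) := by
        rw [Real.exp_add]; ring
    _ = _ := by rw [hsqrt, hexp, Real.exp_add]; ring

lemma gaussianPDF_mul (μ b a : ℝ) (v w : ℝ≥0) (hv : v ≠ 0) (hw : w ≠ 0) (x y : ℝ) :
    gaussianPDF μ v x * gaussianPDF (a * x + b) w y
      = gaussianPDF (a * μ + b) (⟨a ^ 2, sq_nonneg a⟩ * v + w) y
        * gaussianPDF ((μ * w + a * (y - b) * v) / (a ^ 2 * v + w))
            (v * w / (⟨a ^ 2, sq_nonneg a⟩ * v + w)) x := by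
  unfold gaussianPDF
  rw [← ENNReal.ofReal_mul (gaussianPDFReal_nonneg _ _ _),
    ← ENNReal.ofReal_mul (gaussianPDFReal_nonneg _ _ _),
    pdf_mul_pdf μ b a v w hv hw x y]

lemma gaussianReal_bind_gaussianReal (μ b a : ℝ) (v w : ℝ≥0) (hv : v ≠ 0) (hw : w ≠ 0) :
    (gaussianReal μ v).bind (fun x => gaussianReal (a * x + b) w)
      = gaussianReal (a * μ + b) (⟨a ^ 2, sq_nonneg a⟩ * v + w) := by
  have htne : (⟨a ^ 2, sq_nonneg a⟩ * v + w : ℝ≥0) ≠ 0 := by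
    intro hh
    exact hw (by simpa using (add_eq_zero.mp hh).2)
  have hune : (v * w / (⟨a ^ 2, sq_nonneg a⟩ * v + w) : ℝ≥0) ≠ 0 := by
    rw [div_ne_zero_iff]
    exact ⟨mul_ne_zero hv hw, htne⟩
  ext s hs
  rw [Measure.bind_apply hs (meas_kernel a b w hw).aemeasurable]
  rw [gaussianReal_of_var_ne_zero μ hv]
  rw [lintegral_withDensity_eq_lintegral_mul _ (measurable_gaussianPDF _ _)
    (show Measurable fun x : ℝ => (gaussianReal (a * x + b) w) s from
      (Measure.measurable_coe hs).comp (meas_kernel a b w hw))]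
  simp only [Pi.mul_apply]
  have h1 : ∀ x : ℝ, gaussianPDF μ v x * gaussianReal (a * x + b) w s
      = ∫⁻ y in s, gaussianPDF μ v x * gaussianPDF (a * x + b) w y := by
    intro x
    rw [gaussianReal_apply _ hw s, ← lintegral_const_mul _ (measurable_gaussianPDF _ _)]
  simp_rw [h1]
  rw [lintegral_lintegral_swap]
  · have h2 : ∀ y : ℝ, (∫⁻ x, gaussianPDF μ v x * gaussianPDF (a * x + b) w y)
        = gaussianPDF (a * μ + b) (⟨a ^ 2, sq_nonneg a⟩ * v + w) y := by
      intro y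
      simp_rw [gaussianPDF_mul μ b a v w hv hw _ y]
      rw [lintegral_const_mul' _ _ (by simp [gaussianPDF, ENNReal.ofReal_ne_top]),
        lintegral_gaussianPDF_eq_one _ hune, mul_one]
    simp_rw [h2]
    rw [gaussianReal_apply _ htne s]
  · apply Measurable.aemeasurable
    have : Measurable fun p : ℝ × ℝ => gaussianPDF μ v p.1 := by
      exact (measurable_gaussianPDF μ v).comp measurable_fst
    exact this.mul (meas_joint a b w)

end DiffAux
end

open DiffAux in
/-- If X ~ N(√α_t·z_0 + √c_t·h, (1-α_t)) and, conditionally on X = x,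
Y ~ N(κ_t·x + λ_t·z_0 + ν_t·h, σ_t²), then the marginal of Y is
N(√α_{t-1}·z_0 + √c_{t-1}·h, (1-α_{t-1})). -/
theorem diffusion_marginal_step (z₀ h : ℝ) (α α' c c' σ : ℝ)
    (hα : α ∈ Set.Ioo (0:ℝ) 1) (hα' : α' ∈ Set.Ioo (0:ℝ) 1)
    (hc : 0 ≤ c) (hc' : 0 ≤ c') (hσ : 0 ≤ σ) (hσ2 : σ ^ 2 < 1 - α')
    (κ lam ν : ℝ)
    (hκ : κ = Real.sqrt ((1 - α' - σ ^ 2) / (1 - α)))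
    (hlam : lam = Real.sqrt α' - Real.sqrt α * κ)
    (hν : ν = Real.sqrt c' - Real.sqrt c * κ) :
    (gaussianReal (Real.sqrt α * z₀ + Real.sqrt c * h) (1 - α).toNNReal).bind
        (fun x => gaussianReal (κ * x + lam * z₀ + ν * h) (σ ^ 2).toNNReal)
      = gaussianReal (Real.sqrt α' * z₀ + Real.sqrt c' * h) (1 - α').toNNReal := by
  have hαlt : (0:ℝ) < 1 - α := by linarith [hα.2]
  have hα'lt : (0:ℝ) < 1 - α' := by linarith [hα'.2]
  have hnum : (0:ℝ) ≤ 1 - α' - σ ^ 2 := by linarith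
  have hκsq : κ ^ 2 = (1 - α' - σ ^ 2) / (1 - α) := by
    rw [hκ, sq_sqrt (by positivity)]
  have hκv : κ ^ 2 * (1 - α) = 1 - α' - σ ^ 2 := by
    rw [hκsq]; field_simp
  set μ₀ : ℝ := Real.sqrt α * z₀ + Real.sqrt c * h with hμ₀
  have hmean : κ * μ₀ + (lam * z₀ + ν * h) = Real.sqrt α' * z₀ + Real.sqrt c' * h := by
    rw [hμ₀, hlam, hν]; ring
  have hinner : (fun x => gaussianReal (κ * x + lam * z₀ + ν * h) (σ ^ 2).toNNReal)
      = fun x => gaussianReal (κ * x + (lam * z₀ + ν * h)) (σ ^ 2).toNNReal := by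
    funext x; rw [add_assoc]
  have hvne : (1 - α).toNNReal ≠ 0 := by
    simp only [ne_eq, Real.toNNReal_eq_zero, not_le]
    linarith
  rw [hinner]
  by_cases hσ0 : σ = 0
  · -- dirac case
    have hw0 : (σ ^ 2).toNNReal = 0 := by simp [hσ0]
    rw [hw0]
    simp only [gaussianReal_zero_var]
    rw [Measure.bind_dirac_eq_map _ (by fun_prop : Measurable fun x : ℝ => κ * x + (lam * z₀ + ν * h))]
    have : (fun x : ℝ => κ * x + (lam * z₀ + ν * h))
        = (fun x => x + (lam * z₀ + ν * h)) ∘ (fun x => κ * x) := rfl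
    rw [this, ← Measure.map_map (by fun_prop : Measurable fun x : ℝ => x + (lam * z₀ + ν * h)) (by fun_prop : Measurable fun x : ℝ => κ * x)]
    rw [ProbabilityTheory.gaussianReal_map_const_mul κ, gaussianReal_map_add_const]
    rw [hmean]
    congr 1
    rw [← NNReal.coe_inj]
    push_cast
    rw [Real.coe_toNNReal _ hαlt.le, Real.coe_toNNReal _ hα'lt.le]
    rw [hσ0] at hκv
    simpa using hκv
  · have hwne : (σ ^ 2).toNNReal ≠ 0 := by
      simp only [ne_eq, Real.toNNReal_eq_zero, not_le]
      positivity
    rw [gaussianReal_bind_gaussianReal μ₀ (lam * z₀ + ν * h) κ _ _ hvne hwne, hmean]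
    congr 1
    rw [← NNReal.coe_inj]
    push_cast
    rw [show ((⟨κ ^ 2, sq_nonneg κ⟩ * (1 - α).toNNReal : ℝ≥0) : ℝ) = κ ^ 2 * (1 - α).toNNReal from NNReal.coe_mul _ _]
    rw [Real.coe_toNNReal _ hαlt.le, Real.coe_toNNReal _ hα'lt.le,
      Real.coe_toNNReal _ (by positivity : (0:ℝ) ≤ σ ^ 2)]
    linarith [hκv]
end

section
/- Backward induction for the diffusion marginals: suppose q(z_T|z_0,h) = N(√α_T z_0 + √c_T h, (1-α_T)I) and for each 2 ≤ t ≤ T, q(z_{t-1}|z_t,z_0,h) = N(κ_t z_t + λ_t z_0 + ν_t h, σ_t² I) with the paper's coefficients. Then for every 1 ≤ t ≤ T, q(z_t|z_0,h) = N(√α_t z_0 + √c_t h, (1-α_t)I). -/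
open MeasureTheory ProbabilityTheory

section DiffusionAux
open Real
open scoped NNReal ENNReal
open scoped NNReal ENNReal

lemma measurable_gaussPair (κ' b : ℝ) (w : ℝ≥0) :
    Measurable (fun p : ℝ × ℝ => gaussianPDF (κ' * p.1 + b) w p.2) := by
  apply Measurable.ennreal_ofReal
  unfold gaussianPDFReal
  exact ((((measurable_snd.sub ((measurable_fst.const_mul κ').add_const b)).pow_const
    2).neg.div_const _).exp.const_mul _)

lemma measurable_gaussianKernel (κ' b : ℝ) (w : ℝ≥0) :
    Measurable (fun x : ℝ => gaussianReal (κ' * x + b) w) := by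
  have hb : Measurable (fun x : ℝ => κ' * x + b) :=
    (measurable_id.const_mul κ').add_const b
  by_cases hw : w = 0
  · subst hw
    simpa [Function.comp_def] using Measure.measurable_dirac.comp hb
  · simp_rw [gaussianReal_of_var_ne_zero _ hw]
    rw [Measure.measurable_measure]
    intro s hs
    simp_rw [withDensity_apply _ hs]
    exact Measurable.lintegral_prod_right' (measurable_gaussPair κ' b w)

lemma conv_integral (m b κ' y : ℝ) {a w : ℝ} (ha : 0 < a) (hw : 0 < w) :
    ∫ x : ℝ, (√(2*π*a))⁻¹ * rexp (-(x - m)^2 / (2*a)) *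
      ((√(2*π*w))⁻¹ * rexp (-(y - (κ'*x+b))^2 / (2*w)))
    = (√(2*π*(κ'^2*a+w)))⁻¹ * rexp (-(y - (κ'*m+b))^2 / (2*(κ'^2*a+w))) := by
  have hπ := Real.pi_pos
  set V : ℝ := κ'^2*a + w with hVdef
  have hV : 0 < V := by positivity
  set K : ℝ := V / (2*a*w) with hKdef
  have hK : 0 < K := by positivity
  set cc : ℝ := (w*m + a*κ'*(y-b)) / V with hccdef
  have hexp : ∀ x : ℝ, -(x - m)^2 / (2*a) + -(y - (κ'*x+b))^2 / (2*w)
      = -K*(x-cc)^2 + -(y-(κ'*m+b))^2/(2*V) := by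
    intro x
    rw [hKdef, hccdef, hVdef]
    field_simp
    ring
  have h1 : ∀ x : ℝ, (√(2*π*a))⁻¹ * rexp (-(x - m)^2 / (2*a)) *
      ((√(2*π*w))⁻¹ * rexp (-(y - (κ'*x+b))^2 / (2*w)))
      = ((√(2*π*a))⁻¹ * (√(2*π*w))⁻¹ * rexp (-(y-(κ'*m+b))^2/(2*V)))
          * rexp (-K*(x-cc)^2) := by
    intro x
    rw [mul_mul_mul_comm, ← Real.exp_add, hexp x, Real.exp_add]
    ring
  simp_rw [h1]
  rw [integral_const_mul]
  have h2 : ∫ x : ℝ, rexp (-K*(x-cc)^2) = √(π/K) := by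
    rw [integral_sub_right_eq_self (fun x => rexp (-K*x^2)) cc]
    exact integral_gaussian K
  rw [h2]
  have h3 : (√(2*π*a))⁻¹ * (√(2*π*w))⁻¹ * √(π/K) = (√(2*π*V))⁻¹ := by
    rw [← Real.sqrt_inv, ← Real.sqrt_inv, ← Real.sqrt_inv, ← Real.sqrt_mul (by positivity),
      ← Real.sqrt_mul (by positivity)]
    congr 1
    rw [hKdef]
    field_simp
  rw [← h3]; ring

lemma conv_pdf (m b κ' : ℝ) {v w : ℝ≥0} (hv : v ≠ 0) (hw : w ≠ 0) (y : ℝ) :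
    ∫⁻ x : ℝ, gaussianPDF m v x * gaussianPDF (κ'*x+b) w y
      = gaussianPDF (κ'*m+b) (Real.toNNReal (κ'^2) * v + w) y := by
  have hπ := Real.pi_pos
  have hva : (0:ℝ) < v := lt_of_le_of_ne v.coe_nonneg (by exact_mod_cast (Ne.symm hv))
  have hwa : (0:ℝ) < w := lt_of_le_of_ne w.coe_nonneg (by exact_mod_cast (Ne.symm hw))
  have hnn : ∀ x : ℝ, 0 ≤ gaussianPDFReal m v x * gaussianPDFReal (κ'*x+b) w y :=
    fun x => mul_nonneg (gaussianPDFReal_nonneg _ _ _) (gaussianPDFReal_nonneg _ _ _)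
  have hmeas2 : Measurable (fun x : ℝ => gaussianPDFReal (κ'*x+b) w y) := by
    unfold gaussianPDFReal
    exact ((((measurable_const.sub ((measurable_id.const_mul κ').add_const b)).pow_const
      2).neg.div_const _).exp.const_mul _)
  have hint : Integrable (fun x : ℝ => gaussianPDFReal m v x * gaussianPDFReal (κ'*x+b) w y) := by
    have hb : ∀ x : ℝ, ‖gaussianPDFReal (κ'*x+b) w y‖ ≤ (√(2*π*w))⁻¹ := by
      intro x
      rw [Real.norm_of_nonneg (gaussianPDFReal_nonneg _ _ _)]
      unfold gaussianPDFReal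
      calc (√(2*π*(w:ℝ)))⁻¹ * rexp (-(y - (κ'*x+b))^2 / (2*w))
          ≤ (√(2*π*(w:ℝ)))⁻¹ * 1 := by
            gcongr
            exact Real.exp_le_one_iff.mpr
              (div_nonpos_of_nonpos_of_nonneg (neg_nonpos_of_nonneg (sq_nonneg _))
                (by positivity))
        _ = (√(2*π*(w:ℝ)))⁻¹ := mul_one _
    have := Integrable.bdd_mul (integrable_gaussianPDFReal m v)
      hmeas2.aestronglyMeasurable (ae_of_all _ hb)
    simpa [mul_comm] using this
  calc ∫⁻ x : ℝ, gaussianPDF m v x * gaussianPDF (κ'*x+b) w y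
      = ∫⁻ x : ℝ, ENNReal.ofReal (gaussianPDFReal m v x * gaussianPDFReal (κ'*x+b) w y) := by
        simp_rw [gaussianPDF, ENNReal.ofReal_mul (gaussianPDFReal_nonneg m v _)]
    _ = ENNReal.ofReal (∫ x : ℝ, gaussianPDFReal m v x * gaussianPDFReal (κ'*x+b) w y) :=
        (ofReal_integral_eq_lintegral_ofReal hint (ae_of_all _ hnn)).symm
    _ = gaussianPDF (κ'*m+b) (Real.toNNReal (κ'^2) * v + w) y := by
        unfold gaussianPDF gaussianPDFReal
        congr 1
        rw [conv_integral m b κ' y hva hwa]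
        have hcoe : ((Real.toNNReal (κ'^2) * v + w : ℝ≥0) : ℝ) = κ'^2 * (v:ℝ) + (w:ℝ) := by
          push_cast [Real.coe_toNNReal _ (sq_nonneg κ')]
          ring
        rw [hcoe]

lemma gaussianReal_bind_affine (m b κ' : ℝ) (v w : ℝ≥0) :
    (gaussianReal m v).bind (fun x => gaussianReal (κ' * x + b) w)
      = gaussianReal (κ' * m + b) (Real.toNNReal (κ'^2) * v + w) := by
  have htn : Real.toNNReal (κ'^2) = (⟨κ'^2, sq_nonneg _⟩ : ℝ≥0) := by
    ext
    exact Real.coe_toNNReal _ (sq_nonneg κ')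
  by_cases hw : w = 0
  · subst hw
    simp only [gaussianReal_zero_var, add_zero]
    rw [Measure.bind_dirac_eq_map _ (f := fun x : ℝ => κ' * x + b) (by fun_prop)]
    have hcomp : (fun x : ℝ => κ' * x + b) = (fun x => x + b) ∘ (fun x => κ' * x) := rfl
    rw [hcomp, ← Measure.map_map (f := fun x : ℝ => κ' * x) (g := fun x : ℝ => x + b)
      (by fun_prop) (by fun_prop)]
    rw [gaussianReal_map_const_mul, gaussianReal_map_add_const]
    rw [htn]
    rfl
  · by_cases hv : v = 0
    · subst hv
      simp only [gaussianReal_zero_var, mul_zero, zero_add]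
      rw [Measure.dirac_bind (measurable_gaussianKernel κ' b w)]
    · ext s hs
      rw [Measure.bind_apply hs (measurable_gaussianKernel κ' b w).aemeasurable]
      rw [gaussianReal_of_var_ne_zero _ hv]
      have hker : ∀ x : ℝ, gaussianReal (κ'*x+b) w s = ∫⁻ y in s, gaussianPDF (κ'*x+b) w y := by
        intro x
        rw [gaussianReal_of_var_ne_zero _ hw, withDensity_apply _ hs]
      simp_rw [hker]
      rw [lintegral_withDensity_eq_lintegral_mul _ (measurable_gaussianPDF m v)
        (Measurable.lintegral_prod_right' (measurable_gaussPair κ' b w))]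
      simp only [Pi.mul_apply]
      have hpull : ∀ x : ℝ, gaussianPDF m v x * ∫⁻ y in s, gaussianPDF (κ'*x+b) w y
          = ∫⁻ y in s, gaussianPDF m v x * gaussianPDF (κ'*x+b) w y := fun x =>
        (lintegral_const_mul _ (measurable_gaussianPDF _ w)).symm
      simp_rw [hpull]
      rw [lintegral_lintegral_swap
        (((measurable_gaussianPDF m v).comp measurable_fst).mul
          (measurable_gaussPair κ' b w)).aemeasurable]
      simp_rw [conv_pdf m b κ' hv hw]
      rw [gaussianReal_of_var_ne_zero _ (by simp [hw]), withDensity_apply _ hs]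

end DiffusionAux

/-- Backward induction for the diffusion marginals: if
q(z_T|z_0,h) = N(√α_T z_0 + √c_T h, 1-α_T) and for each 2 ≤ t ≤ T the posterior
q(z_{t-1}|z_t,z_0,h) = N(κ_t z_t + λ_t z_0 + ν_t h, σ_t²) with the paper's
coefficients, then for all 1 ≤ t ≤ T, q(z_t|z_0,h) = N(√α_t z_0 + √c_t h, 1-α_t). -/
theorem diffusion_marginals_by_induction (z₀ h : ℝ) (T : ℕ) (hT : 1 ≤ T)
    (α c σ : ℕ → ℝ)
    (hα : ∀ t, α t ∈ Set.Ioo (0:ℝ) 1)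
    (hc : ∀ t, 0 ≤ c t)
    (hσ : ∀ t, 0 ≤ σ t)
    (hσ2 : ∀ t, σ t ^ 2 < 1 - α (t - 1))
    (κ lam ν : ℕ → ℝ)
    (hκ : ∀ t, κ t = Real.sqrt ((1 - α (t - 1) - σ t ^ 2) / (1 - α t)))
    (hlam : ∀ t, lam t = Real.sqrt (α (t - 1)) - Real.sqrt (α t) * κ t)
    (hν : ∀ t, ν t = Real.sqrt (c (t - 1)) - Real.sqrt (c t) * κ t)
    (q : ℕ → Measure ℝ)
    (hqT : q T = gaussianReal (Real.sqrt (α T) * z₀ + Real.sqrt (c T) * h)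
                   (1 - α T).toNNReal)
    (hstep : ∀ t : ℕ, 2 ≤ t → t ≤ T →
      q (t - 1) = (q t).bind
        (fun x => gaussianReal (κ t * x + lam t * z₀ + ν t * h)
          (σ t ^ 2).toNNReal)) :
    ∀ t : ℕ, 1 ≤ t → t ≤ T →
      q t = gaussianReal (Real.sqrt (α t) * z₀ + Real.sqrt (c t) * h)
              (1 - α t).toNNReal := by
  have main : ∀ d t : ℕ, 1 ≤ t → t + d = T →
      q t = gaussianReal (Real.sqrt (α t) * z₀ + Real.sqrt (c t) * h)
              (1 - α t).toNNReal := by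
    intro d
    induction d with
    | zero =>
      intro t h1 h2
      rw [Nat.add_zero] at h2
      subst h2
      exact hqT
    | succ d ih =>
      intro t h1 h2
      have hq1 := ih (t+1) (by omega) (by omega)
      have hs := hstep (t+1) (by omega) (by omega)
      simp only [Nat.add_sub_cancel] at hs
      rw [hs, hq1]
      have hassoc : (fun x : ℝ => gaussianReal (κ (t+1) * x + lam (t+1) * z₀ + ν (t+1) * h)
            (σ (t+1) ^ 2).toNNReal)
          = fun x : ℝ => gaussianReal (κ (t+1) * x + (lam (t+1) * z₀ + ν (t+1) * h))
            (σ (t+1) ^ 2).toNNReal := by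
        funext x
        ring_nf
      rw [hassoc, gaussianReal_bind_affine]
      have hα1 := hα t
      have hα2 := hα (t+1)
      have hA : (0:ℝ) < 1 - α (t+1) := by linarith [hα2.2]
      have hP : (0:ℝ) < 1 - α t - σ (t+1)^2 := by
        have := hσ2 (t+1)
        simp only [Nat.add_sub_cancel] at this
        linarith
      have hκv : κ (t+1) = Real.sqrt ((1 - α t - σ (t+1)^2) / (1 - α (t+1))) := by
        have := hκ (t+1)
        simpa only [Nat.add_sub_cancel] using this
      have hκsq : κ (t+1)^2 = (1 - α t - σ (t+1)^2) / (1 - α (t+1)) := by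
        rw [hκv, Real.sq_sqrt (by positivity)]
      congr 1
      · have hl := hlam (t+1)
        have hn := hν (t+1)
        simp only [Nat.add_sub_cancel] at hl hn
        rw [hl, hn]
        ring
      · rw [← Real.toNNReal_mul (sq_nonneg _),
          ← Real.toNNReal_add (by nlinarith [sq_nonneg (κ (t+1))]) (sq_nonneg _)]
        congr 1
        rw [hκsq]
        field_simp
        ring
  intro t h1 h2
  exact main (T - t) t h1 (by omega)
end
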